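/- arXiv:2005.09690 — 3 statements merged into one kernel-verified Lean document; each statement's English description precedes it below -/
import Mathlib

section
/- If L is an algebraically closed field containing an algebraically closed field k, then the tensor product L ⊗_k L is an integral domain. -/
open TensorProduct

/-- Nullstellensatz: every maximal ideal of a finitely generated algebra over an
algebraically closed field is the kernel of a `k`-point. -/
lemma aux_point {k A : Type*} [Field k] [IsAlgClosed k] [CommRing A] [Nontrivial A]
    [Algebra k A] [Algebra.FiniteType k A] (m : Ideal A) (hm : m.IsMaximal) :
    ∃ φ : A →ₐ[k] k, ∀ a ∈ m, φ a = 0 := by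
  haveI := hm
  haveI : Algebra.FiniteType k (A ⧸ m) :=
    Algebra.FiniteType.of_surjective (Ideal.Quotient.mkₐ k m)
      (Ideal.Quotient.mkₐ_surjective k m)
  letI : Field (A ⧸ m) := Ideal.Quotient.field m
  haveI : Module.Finite k (A ⧸ m) := finite_of_finite_type_of_isJacobsonRing k (A ⧸ m)
  have hsurj : Function.Surjective (algebraMap k (A ⧸ m)) :=
    IsAlgClosed.algebraMap_bijective_of_isIntegral.2
  let e : k ≃ₐ[k] (A ⧸ m) := AlgEquiv.ofBijective (Algebra.ofId k (A ⧸ m))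
    ⟨(algebraMap k (A ⧸ m)).injective, hsurj⟩
  refine ⟨(e.symm : (A ⧸ m) →ₐ[k] k).comp (Ideal.Quotient.mkₐ k m), fun a ha => ?_⟩
  simp [Ideal.Quotient.eq_zero_iff_mem.mpr ha]

/-- Key lemma: if `A` is a finitely generated domain over an algebraically closed field `k`
and `L` is any field extension of `k`, then `A ⊗[k] L` has no zero divisors. -/
lemma aux_domain {k A L : Type*} [Field k] [IsAlgClosed k]
    [CommRing A] [IsDomain A] [Algebra k A] [Algebra.FiniteType k A]
    [Field L] [Algebra k L]
    (x y : A ⊗[k] L) (hxy : x * y = 0) : x = 0 ∨ y = 0 := by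
  by_contra h
  push_neg at h
  obtain ⟨hx, hy⟩ := h
  classical
  set b : Module.Basis _ k L := Module.Basis.ofVectorSpace k L with hb
  set B := Algebra.TensorProduct.basis A b with hB
  set c := B.repr x with hc
  set d := B.repr y with hd
  have hc0 : c ≠ 0 := fun h0 => hx (by rwa [hc, LinearEquiv.map_eq_zero_iff] at h0)
  have hd0 : d ≠ 0 := fun h0 => hy (by rwa [hd, LinearEquiv.map_eq_zero_iff] at h0)
  -- key computation: for any k-point φ of A, the induced map Ψ : A ⊗ L → L
  -- sends z to the linear combination of basis vectors with coefficients φ (coords z)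
  have key : ∀ (φ : A →ₐ[k] k) (z : A ⊗[k] L),
      (Algebra.TensorProduct.productMap ((IsScalarTower.toAlgHom k k L).comp φ)
        (AlgHom.id k L)) z
        = Finsupp.linearCombination k (⇑b) ((B.repr z).mapRange φ (map_zero φ)) := by
    intro φ z
    induction z using TensorProduct.induction_on with
    | zero => simp
    | tmul a m =>
      have h1 : (B.repr (a ⊗ₜ[k] m)).mapRange φ (map_zero φ) = φ a • b.repr m := by
        ext i
        simp [hB, Algebra.TensorProduct.basis_repr_tmul, Finsupp.mapRange_apply]
      rw [h1, map_smul, Finsupp.linearCombination_apply k (b.repr m)]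
      have h2 : (Finsupp.linearCombination k (⇑b)) (b.repr m) = m := b.linearCombination_repr m
      rw [Finsupp.linearCombination_apply k (b.repr m)] at h2
      rw [h2]
      simp [Algebra.smul_def]
    | add u v hu hv =>
      rw [map_add, map_add, hu, hv, ← map_add]
      congr 1
      ext i
      simp
  -- the ideals of coordinates
  set I := Ideal.span (Set.range c) with hI
  set J := Ideal.span (Set.range d) with hJ
  have main : ∀ m : Ideal A, m.IsMaximal → I ≤ m ∨ J ≤ m := by
    intro m hm
    obtain ⟨φ, hφ⟩ := aux_point (k := k) m hm
    have hne : RingHom.ker φ ≠ ⊤ := by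
      intro htop
      have h1 : (1 : A) ∈ RingHom.ker φ := htop ▸ Submodule.mem_top
      rw [RingHom.mem_ker] at h1
      simp at h1
    have hker : m = RingHom.ker φ := hm.eq_of_le hne fun a ha => hφ a ha
    set Ψ := Algebra.TensorProduct.productMap ((IsScalarTower.toAlgHom k k L).comp φ)
      (AlgHom.id k L) with hΨ
    have hmul : Ψ x * Ψ y = 0 := by rw [← map_mul, hxy, map_zero]
    have hvanish : ∀ z : A ⊗[k] L, Ψ z = 0 → ∀ i, φ (B.repr z i) = 0 := by
      intro z hz i
      rw [key φ z] at hz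
      have := linearIndependent_iff.mp b.linearIndependent _ hz
      have := DFunLike.congr_fun this i
      simpa [Finsupp.mapRange_apply] using this
    rcases mul_eq_zero.mp hmul with h0 | h0
    · left
      rw [hI, Ideal.span_le]
      rintro _ ⟨i, rfl⟩
      simp only [SetLike.mem_coe, hker, RingHom.mem_ker]
      exact hvanish x h0 i
    · right
      rw [hJ, Ideal.span_le]
      rintro _ ⟨i, rfl⟩
      simp only [SetLike.mem_coe, hker, RingHom.mem_ker]
      exact hvanish y h0 i
  haveI : IsJacobsonRing A := isJacobsonRing_of_finiteType (A := k)
  have hbot : I * J ≤ (⊥ : Ideal A) := by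
    have h1 : I * J ≤ Ideal.jacobson ⊥ := by
      rw [Ideal.jacobson]
      refine le_sInf ?_
      rintro m ⟨-, hm⟩
      rcases main m hm with h | h
      · exact le_trans Ideal.mul_le_left h
      · exact le_trans Ideal.mul_le_right h
    rwa [← Ideal.radical_eq_jacobson, Ideal.radical_bot_of_noZeroDivisors] at h1
  obtain ⟨i, hi⟩ : ∃ i, c i ≠ 0 := by
    by_contra hco; push_neg at hco; exact hc0 (Finsupp.ext hco)
  obtain ⟨j, hj⟩ : ∃ j, d j ≠ 0 := by
    by_contra hdo; push_neg at hdo; exact hd0 (Finsupp.ext hdo)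
  have hmem : c i * d j ∈ I * J :=
    Ideal.mul_mem_mul (Ideal.subset_span ⟨i, rfl⟩) (Ideal.subset_span ⟨j, rfl⟩)
  have := hbot hmem
  rw [Ideal.mem_bot] at this
  exact mul_ne_zero hi hj this

set_option maxHeartbeats 1000000 in
set_option synthInstance.maxHeartbeats 400000 in
/-- The FG-subalgebra version of `aux_domain`. -/
lemma aux_sub {k L : Type*} [Field k] [IsAlgClosed k] [Field L] [Algebra k L]
    (A : Subalgebra k L) (hA : A.FG) (x y : A ⊗[k] L) (hxy : x * y = 0) :
    x = 0 ∨ y = 0 :=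
  haveI : Algebra.FiniteType k A := (Subalgebra.fg_iff_finiteType A).mp hA
  aux_domain x y hxy

set_option maxHeartbeats 1000000 in
set_option synthInstance.maxHeartbeats 400000 in
theorem stmt_0 (k L : Type*) [Field k] [Field L] [IsAlgClosed k] [IsAlgClosed L]
    [Algebra k L] : IsDomain (L ⊗[k] L) := by
  classical
  have hnt : Nontrivial (L ⊗[k] L) := by
    refine ⟨1, 0, fun h => ?_⟩
    have := congrArg (Algebra.TensorProduct.lmul' k (S := L)) h
    simp at this
  haveI := hnt
  have hnzd : ∀ x y : L ⊗[k] L, x * y = 0 → x = 0 ∨ y = 0 := by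
    intro x y hxy
    obtain ⟨Sx, hSx⟩ := TensorProduct.exists_finset x
    obtain ⟨Sy, hSy⟩ := TensorProduct.exists_finset y
    let s : Finset L := Sx.image Prod.fst ∪ Sy.image Prod.fst
    let A : Subalgebra k L := Algebra.adjoin k (s : Set L)
    have hmemx : ∀ p ∈ Sx, p.1 ∈ A := fun p hp =>
      Algebra.subset_adjoin (by
        simp only [s, Finset.coe_union, Set.mem_union, Finset.coe_image, Set.mem_image]
        exact Or.inl ⟨p, hp, rfl⟩)
    have hmemy : ∀ p ∈ Sy, p.1 ∈ A := fun p hp =>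
      Algebra.subset_adjoin (by
        simp only [s, Finset.coe_union, Set.mem_union, Finset.coe_image, Set.mem_image]
        exact Or.inr ⟨p, hp, rfl⟩)
    let f : A ⊗[k] L →ₐ[k] L ⊗[k] L := Algebra.TensorProduct.map A.val (AlgHom.id k L)
    have hfl : f.toLinearMap = LinearMap.rTensor L A.val.toLinearMap :=
      TensorProduct.ext' fun a m => rfl
    have hinj : Function.Injective f := by
      have h1 : Function.Injective f.toLinearMap := by
        rw [hfl]
        exact Module.Flat.rTensor_preserves_injective_linearMap A.val.toLinearMap
          Subtype.val_injective
      exact h1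
    let x' : A ⊗[k] L := Sx.attach.sum fun p => (⟨p.1.1, hmemx p.1 p.2⟩ : A) ⊗ₜ[k] p.1.2
    let y' : A ⊗[k] L := Sy.attach.sum fun p => (⟨p.1.1, hmemy p.1 p.2⟩ : A) ⊗ₜ[k] p.1.2
    have hfx : f x' = x := by
      rw [map_sum, hSx]
      rw [← Finset.sum_attach Sx fun p => p.1 ⊗ₜ[k] p.2]
      refine Finset.sum_congr rfl fun p _ => ?_
      simp [f]
    have hfy : f y' = y := by
      rw [map_sum, hSy]
      rw [← Finset.sum_attach Sy fun p => p.1 ⊗ₜ[k] p.2]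
      refine Finset.sum_congr rfl fun p _ => ?_
      simp [f]
    have hxy' : x' * y' = 0 := by
      apply hinj
      rw [map_mul, hfx, hfy, hxy, map_zero]
    rcases aux_sub A (Subalgebra.fg_adjoin_finset s) x' y' hxy' with h | h
    · left; rw [← hfx, h, map_zero]
    · right; rw [← hfy, h, map_zero]
  haveI : NoZeroDivisors (L ⊗[k] L) :=
    ⟨fun {a b} hab => hnzd a b hab⟩
  exact NoZeroDivisors.to_isDomain _
end

section
/- If k ⊆ L are algebraically closed fields and F is an intermediate field with k(x₁,…,xₙ) ⊆ F ⊆ L(x₁,…,xₙ) such that F is a finite separable extension of k(x₁,…,xₙ), then F = k(x₁,…,xₙ). -/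
set_option synthInstance.maxHeartbeats 1000000
set_option maxHeartbeats 1000000

open Polynomial in
theorem exists_algHom_to_base (k A : Type*) [Field k] [IsAlgClosed k] [CommRing A]
    [Nontrivial A] [Algebra k A] [Algebra.FiniteType k A] : Nonempty (A →ₐ[k] k) := by
  obtain ⟨m, hm⟩ := Ideal.exists_maximal A
  letI : Field (A ⧸ m) := Ideal.Quotient.field m
  haveI : Algebra.FiniteType k (A ⧸ m) :=
    Algebra.FiniteType.of_surjective (Ideal.Quotient.mkₐ k m) (Ideal.Quotient.mkₐ_surjective k m)
  haveI : Module.Finite k (A ⧸ m) := finite_of_finite_type_of_isJacobsonRing k (A ⧸ m)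
  haveI : Algebra.IsIntegral k (A ⧸ m) := Algebra.IsIntegral.of_finite k (A ⧸ m)
  have hbij : Function.Bijective (algebraMap k (A ⧸ m)) :=
    ⟨(algebraMap k (A ⧸ m)).injective, IsAlgClosed.algebraMap_bijective_of_isIntegral.2⟩
  exact ⟨((AlgEquiv.ofBijective (Algebra.ofId k (A ⧸ m)) hbij).symm.toAlgHom).comp
    (Ideal.Quotient.mkₐ k m)⟩

noncomputable def eee {R : Type*} [CommRing R] (N : Polynomial R) {S : Type*} [CommRing S]
    (f : R →+* S) (P Q : S) : S :=
  ∑ j ∈ Finset.range (N.natDegree + 1), f (N.coeff j) * P ^ j * Q ^ (N.natDegree - j)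

theorem eee_map {R S T : Type*} [CommRing R] [CommRing S] [CommRing T] (N : Polynomial R)
    (f : R →+* S) (g : S →+* T) (P Q : S) :
    g (eee N f P Q) = eee N (g.comp f) (g P) (g Q) := by
  simp [eee, map_sum, map_mul, map_pow]

theorem eee_eq {R S : Type*} [CommRing R] [CommRing S] (N : Polynomial R)
    (f : R →+* S) {P Q z : S} (h : Q * z = P) :
    eee N f P Q = Q ^ N.natDegree * Polynomial.eval₂ f z N := by
  rw [Polynomial.eval₂_eq_sum_range, Finset.mul_sum]
  refine Finset.sum_congr rfl fun j hj => ?_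
  have hle : j ≤ N.natDegree := Nat.lt_succ_iff.mp (Finset.mem_range.mp hj)
  have h2 : Q ^ N.natDegree = Q ^ j * Q ^ (N.natDegree - j) := by
    rw [← pow_add, Nat.add_sub_cancel' hle]
  rw [h2, ← h]
  ring

open MvPolynomial in
theorem mv_restrict {σ k L : Type*} [CommSemiring k] [CommSemiring L] [Algebra k L]
    (A : Subalgebra k L) (p : MvPolynomial σ L) (h : ∀ m, p.coeff m ∈ A) :
    ∃ p' : MvPolynomial σ A, MvPolynomial.map (algebraMap A L) p' = p := by
  refine ⟨∑ m ∈ p.support, monomial m ⟨p.coeff m, h m⟩, ?_⟩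
  rw [map_sum]
  simp only [map_monomial]
  exact p.support_sum_monomial_coeff

/-- The natural inclusion `k(x₁,…,xₙ) → L(x₁,…,xₙ)` induced by `k → L`. -/
noncomputable instance ratFuncAlgebra (k L : Type*) [Field k] [Field L] [Algebra k L]
    (n : ℕ) :
    Algebra (FractionRing (MvPolynomial (Fin n) k)) (FractionRing (MvPolynomial (Fin n) L)) :=
  RingHom.toAlgebra <| IsFractionRing.lift
    (g := (algebraMap (MvPolynomial (Fin n) L)
        (FractionRing (MvPolynomial (Fin n) L))).comp (MvPolynomial.map (algebraMap k L)))
    ((IsFractionRing.injective _ _).comp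
      (MvPolynomial.map_injective (algebraMap k L) (algebraMap k L).injective))

/-- If `k ⊆ L` are algebraically closed fields and `F` is an intermediate field with
`k(x₁,…,xₙ) ⊆ F ⊆ L(x₁,…,xₙ)` which is finite separable over `k(x₁,…,xₙ)`, then
`F = k(x₁,…,xₙ)`. -/
theorem stmt_2 (k L : Type*) [Field k] [Field L] [IsAlgClosed k] [IsAlgClosed L]
    [Algebra k L] (n : ℕ)
    (F : IntermediateField (FractionRing (MvPolynomial (Fin n) k))
      (FractionRing (MvPolynomial (Fin n) L)))
    [FiniteDimensional (FractionRing (MvPolynomial (Fin n) k)) F]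
    [Algebra.IsSeparable (FractionRing (MvPolynomial (Fin n) k)) F] :
    F = ⊥ := by
  classical
  set Pk := MvPolynomial (Fin n) k with hPkdef
  set PL := MvPolynomial (Fin n) L with hPLdef
  set K := FractionRing Pk with hKdef
  set M := FractionRing PL with hMdef
  refine le_antisymm (fun α hα => ?_) bot_le
  rw [IntermediateField.mem_bot]
  -- α is integral over K
  have hint : IsIntegral K α := by
    have h1 : IsIntegral K (⟨α, hα⟩ : F) := IsIntegral.of_finite K _
    simpa using h1.map (IntermediateField.val F)
  obtain ⟨⟨p, q⟩, hpq⟩ := IsLocalization.mk'_surjective (nonZeroDivisors PL) α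
  set m := minpoly K α with hmdef
  set N := IsLocalization.integerNormalization (nonZeroDivisors Pk) m with hNdef
  -- the basic relation, in M
  have hev : Polynomial.eval₂ ((algebraMap K M).comp (algebraMap Pk K)) α N = 0 :=
    IsLocalization.integerNormalization_eval₂_eq_zero _ _ _
      (by rw [← Polynomial.aeval_def]; exact minpoly.aeval K α)
  have hQα : algebraMap PL M ↑q * α = algebraMap PL M p := by
    rw [← hpq, mul_comm]; exact IsLocalization.mk'_spec _ p q
  have hE1 : eee N ((algebraMap K M).comp (algebraMap Pk K))
      (algebraMap PL M p) (algebraMap PL M ↑q) = 0 := by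
    rw [eee_eq N _ hQα, hev, mul_zero]
  -- descend to PL
  have halg : (algebraMap K M) = IsFractionRing.lift
      (g := (algebraMap PL M).comp (MvPolynomial.map (algebraMap k L)))
      ((IsFractionRing.injective _ _).comp
        (MvPolynomial.map_injective (algebraMap k L) (algebraMap k L).injective)) := rfl
  have hcomm : (algebraMap PL M).comp (MvPolynomial.map (algebraMap k L))
      = (algebraMap K M).comp (algebraMap Pk K) := by
    refine RingHom.ext fun x => ?_
    rw [RingHom.comp_apply, RingHom.comp_apply, halg, IsFractionRing.lift_algebraMap]
    rfl
  have hE0 : eee N (MvPolynomial.map (algebraMap k L)) p ↑q = 0 := by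
    apply IsFractionRing.injective PL M
    rw [map_zero, eee_map, hcomm]
    exact hE1
  -- pick the subalgebra A of L
  have hq0 : (q : PL) ≠ 0 := nonZeroDivisors.coe_ne_zero q
  obtain ⟨m₀, hm₀⟩ := MvPolynomial.ne_zero_iff.mp hq0
  set c : L := (q : PL).coeff m₀ with hcdef
  set s : Finset L := p.support.image p.coeff ∪ (q : PL).support.image (q : PL).coeff ∪ {c⁻¹}
    with hsdef
  set A := Algebra.adjoin k (↑s : Set L) with hAdef
  haveI : Algebra.FiniteType k A := (Subalgebra.fg_iff_finiteType A).mp (Subalgebra.fg_adjoin_finset s)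
  haveI : Nontrivial A := nontrivial_of_ne 0 1 fun h => zero_ne_one (congrArg Subtype.val h)
  have hmemp : ∀ mm, p.coeff mm ∈ A := by
    intro mm
    by_cases h : mm ∈ p.support
    · exact Algebra.subset_adjoin (Finset.mem_coe.mpr (Finset.mem_union_left _
        (Finset.mem_union_left _ (Finset.mem_image_of_mem _ h))))
    · rw [MvPolynomial.notMem_support_iff.mp h]; exact zero_mem _
  have hmemq : ∀ mm, (q : PL).coeff mm ∈ A := by
    intro mm
    by_cases h : mm ∈ (q : PL).support
    · exact Algebra.subset_adjoin (Finset.mem_coe.mpr (Finset.mem_union_left _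
        (Finset.mem_union_right _ (Finset.mem_image_of_mem _ h))))
    · rw [MvPolynomial.notMem_support_iff.mp h]; exact zero_mem _
  have hcinv : c⁻¹ ∈ A := Algebra.subset_adjoin (Finset.mem_coe.mpr
    (Finset.mem_union_right _ (Finset.mem_singleton_self _)))
  obtain ⟨p'', hp''⟩ := mv_restrict A p hmemp
  obtain ⟨q'', hq''⟩ := mv_restrict A (q : PL) hmemq
  obtain ⟨ψ⟩ := exists_algHom_to_base k A
  have hinjA : Function.Injective (algebraMap A L) := fun a b h => Subtype.ext h
  -- descend to A
  have hE2 : eee N (MvPolynomial.map (algebraMap k A)) p'' q'' = 0 := by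
    apply MvPolynomial.map_injective (algebraMap A L) hinjA
    rw [map_zero, eee_map, hp'', hq'']
    have : (MvPolynomial.map (algebraMap A L)).comp (MvPolynomial.map (algebraMap k A))
        = (MvPolynomial.map (algebraMap k L) : Pk →+* PL) :=
      RingHom.ext fun x => by
        rw [RingHom.comp_apply, MvPolynomial.map_map, ← IsScalarTower.algebraMap_eq]
    rw [this]
    exact hE0
  -- specialize via ψ
  have hcompid : ((MvPolynomial.map (ψ : A →+* k)).comp
      (MvPolynomial.map (algebraMap k A)) : Pk →+* Pk) = RingHom.id Pk := by
    refine RingHom.ext fun x => ?_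
    rw [RingHom.comp_apply, MvPolynomial.map_map]
    have : (ψ : A →+* k).comp (algebraMap k A) = RingHom.id k := RingHom.ext fun y => ψ.commutes y
    rw [this, RingHom.id_apply, MvPolynomial.map_id]
  have hE3 : eee N (RingHom.id Pk) (MvPolynomial.map (ψ : A →+* k) p'')
      (MvPolynomial.map (ψ : A →+* k) q'') = 0 := by
    have := congrArg (MvPolynomial.map (ψ : A →+* k)) hE2
    rwa [map_zero, eee_map, hcompid] at this
  -- the specialized denominator is nonzero
  have hc0 : c ≠ 0 := hm₀
  have hcA : algebraMap A L (q''.coeff m₀) = c := by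
    have := congrArg (MvPolynomial.coeff m₀) hq''
    simpa [MvPolynomial.coeff_map] using this
  have hψc : ψ (q''.coeff m₀) ≠ 0 := by
    have hone : q''.coeff m₀ * ⟨c⁻¹, hcinv⟩ = 1 := by
      apply hinjA
      rw [map_mul, map_one, hcA]
      show c * c⁻¹ = 1
      exact mul_inv_cancel₀ hc0
    intro h
    have := congrArg ψ hone
    rw [map_mul, map_one, h, zero_mul] at this
    exact zero_ne_one this
  have hqt0 : MvPolynomial.map (ψ : A →+* k) q'' ≠ 0 := by
    intro h
    apply hψc
    have := congrArg (fun r => MvPolynomial.coeff m₀ r) h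
    simpa [MvPolynomial.coeff_map] using this
  -- move to K
  set pt := MvPolynomial.map (ψ : A →+* k) p'' with hptdef
  set qt := MvPolynomial.map (ψ : A →+* k) q'' with hqtdef
  have hqhat0 : algebraMap Pk K qt ≠ 0 := fun h =>
    hqt0 (IsFractionRing.injective Pk K (by rw [h, map_zero]))
  set β : K := algebraMap Pk K pt / algebraMap Pk K qt with hβdef
  have hβ : algebraMap Pk K qt * β = algebraMap Pk K pt := by
    rw [hβdef, mul_div_cancel₀]
    exact hqhat0
  have hE4 : eee N (algebraMap Pk K) (algebraMap Pk K pt) (algebraMap Pk K qt) = 0 := by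
    have := congrArg (algebraMap Pk K) hE3
    rwa [map_zero, eee_map, RingHom.comp_id] at this
  rw [eee_eq N _ hβ] at hE4
  have hev2 : Polynomial.eval₂ (algebraMap Pk K) β N = 0 := by
    rcases mul_eq_zero.mp hE4 with h | h
    · exact absurd h (pow_ne_zero _ hqhat0)
    · exact h
  -- conclude m has a root β in K
  obtain ⟨b, hb⟩ := IsLocalization.integerNormalization_map_to_map (nonZeroDivisors Pk) m
  have hroot : Polynomial.eval β m = 0 := by
    have h1 : Polynomial.eval β (N.map (algebraMap Pk K)) = 0 := by
      rw [Polynomial.eval_map]; exact hev2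
    rw [← hNdef] at hb
    rw [hb, Polynomial.eval_smul, Algebra.smul_def] at h1
    have hb0 : algebraMap Pk K (b : Pk) ≠ 0 := fun h =>
      nonZeroDivisors.coe_ne_zero b (IsFractionRing.injective Pk K (by rw [h, map_zero]))
    rcases mul_eq_zero.mp h1 with h | h
    · exact absurd h hb0
    · exact h
  have hdvd : (Polynomial.X - Polynomial.C β) ∣ m :=
    Polynomial.dvd_iff_isRoot.mpr hroot
  have hirr : Irreducible m := minpoly.irreducible hint
  have hass := (Polynomial.irreducible_X_sub_C β).associated_of_dvd hirr hdvd
  have hdeg : m.degree = 1 := by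
    rw [← Polynomial.degree_eq_degree_of_associated hass, Polynomial.degree_X_sub_C]
  obtain ⟨y, hy⟩ := minpoly.degree_eq_one_iff.mp hdeg
  exact ⟨y, hy⟩
end

section
/- Let k ⊆ L be algebraically closed fields of characteristic p > 0. Then the map k[x]/{f^p − f : f ∈ k[x]} → L[x]/{f^p − f : f ∈ L[x]} induced by inclusion of polynomial rings is not surjective; specifically, for any a ∈ L \ k, the class of a·x^(p−1) is not in the image. -/
open Polynomial

/-- Artin–Schreier nonsurjectivity: for algebraically closed fields `k ⊆ L` of characteristic
`p > 0` and `a ∈ L \ k`, the class of `a·x^(p-1)` in `L[x]/{f^p - f}` is not in the image of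
`k[x]/{f^p - f}`; in particular the induced map on quotients is not surjective. -/
theorem stmt_3 (k L : Type*) [Field k] [Field L] [IsAlgClosed k] [IsAlgClosed L]
    [Algebra k L] (p : ℕ) [Fact p.Prime] [CharP k p]
    (a : L) (ha : a ∉ Set.range (algebraMap k L)) :
    ∀ (g : Polynomial k) (f : Polynomial L),
      g.map (algebraMap k L) - C a * X ^ (p - 1) ≠ f ^ p - f := by
  intro g f h
  haveI : CharP L p := charP_of_injective_algebraMap (algebraMap k L).injective p
  have hp : p.Prime := Fact.out
  have hp0 : 0 < p := hp.pos
  have hp1 : 1 < p := hp.one_lt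
  set K : Set L := Set.range (algebraMap k L) with hK
  -- K is closed under p-th roots
  have hroot : ∀ c : L, c ^ p ∈ K → c ∈ K := by
    rintro c ⟨d, hd⟩
    obtain ⟨e, he⟩ := IsAlgClosed.exists_pow_nat_eq d hp0
    refine ⟨e, ?_⟩
    have h1 : (algebraMap k L e - c) ^ p = 0 := by
      rw [sub_pow_char, ← map_pow, he, hd, sub_self]
    have h2 := pow_eq_zero_iff hp0.ne' |>.mp h1
    have := sub_eq_zero.mp h2
    exact this.symm ▸ rfl
  -- coefficients of f^p
  have hcoefffp : ∀ n, (f ^ p).coeff n =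
      (if p ∣ n then f.coeff (n / p) else 0) ^ p := by
    intro n
    rw [← Polynomial.map_frobenius_expand (p := p) f, coeff_map, coeff_expand hp0]
    split <;> simp [frobenius_def, zero_pow hp0.ne']
  -- coefficient equation
  have hc : ∀ n, (g.coeff n |> algebraMap k L) - (if n = p - 1 then a else 0)
      = (f ^ p).coeff n - f.coeff n := by
    intro n
    have := congrArg (fun q => Polynomial.coeff q n) h
    simpa [coeff_map, coeff_X_pow, mul_ite] using this
  -- descent
  have step : ∀ j, f.coeff (p ^ (j + 1) * (p - 1)) ∈ K → f.coeff (p ^ j * (p - 1)) ∈ K := by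
    intro j hj
    set n := p ^ (j + 1) * (p - 1) with hn
    have hdvd : p ∣ n := ⟨p ^ j * (p - 1), by rw [hn, pow_succ]; ring⟩
    have hne : n ≠ p - 1 := by
      have h3 : p ≤ p ^ (j + 1) := Nat.le_self_pow (Nat.succ_ne_zero j) p
      have : p - 1 < n := by
        calc p - 1 < 2 * (p - 1) := by omega
          _ ≤ p ^ (j + 1) * (p - 1) := Nat.mul_le_mul_right _ (by omega)
      omega
    have hq : n / p = p ^ j * (p - 1) := by
      rw [hn, pow_succ, mul_comm (p ^ j) p, mul_assoc, Nat.mul_div_cancel_left _ hp0]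
    have heq := hc n
    rw [if_neg hne, sub_zero, hcoefffp n, if_pos hdvd, hq] at heq
    obtain ⟨u, hu⟩ := hj
    refine hroot _ ⟨g.coeff n + u, ?_⟩
    rw [map_add, hu]
    linear_combination heq
  have descend : ∀ m j, f.coeff (p ^ (j + m) * (p - 1)) ∈ K → f.coeff (p ^ j * (p - 1)) ∈ K := by
    intro m
    induction m with
    | zero => intro j hj; simpa using hj
    | succ m ih =>
      intro j hj
      exact step j (ih (j + 1) (by rwa [show j + 1 + m = j + (m + 1) by omega]))
  have hbase : f.coeff (p ^ (f.natDegree + 1) * (p - 1)) ∈ K := by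
    have hlt : f.natDegree < p ^ (f.natDegree + 1) * (p - 1) := by
      have h1 : f.natDegree + 1 < p ^ (f.natDegree + 1) := Nat.lt_pow_self hp1
      have h2 : 1 ≤ p - 1 := by omega
      calc f.natDegree < p ^ (f.natDegree + 1) := by omega
        _ = p ^ (f.natDegree + 1) * 1 := (mul_one _).symm
        _ ≤ p ^ (f.natDegree + 1) * (p - 1) := Nat.mul_le_mul_left _ h2
    rw [coeff_eq_zero_of_natDegree_lt hlt]
    exact ⟨0, map_zero _⟩
  have hfin : f.coeff (p - 1) ∈ K := by
    have := descend (f.natDegree + 1) 0 (by simpa using hbase)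
    simpa using this
  -- conclude
  have heq := hc (p - 1)
  rw [if_pos rfl, hcoefffp, if_neg (Nat.not_dvd_of_pos_of_lt (by omega) (by omega))] at heq
  have hz : (0 : L) ^ p = 0 := zero_pow hp0.ne'
  rw [hz, zero_sub] at heq
  have : a = algebraMap k L (g.coeff (p - 1)) + f.coeff (p - 1) := by
    linear_combination -heq
  obtain ⟨u, hu⟩ := hfin
  exact ha ⟨g.coeff (p - 1) + u, by rw [map_add, hu, this]⟩
end
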